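/- Two-set excursion Green's function bound: for states a, a' ∈ A with A, B, C partitioning the state space, G_A(a,a') ≤ G_{A∪B}(a,a') ≤ G_A(a,a') + (ρ_a/(1−ρ_{a'}))·G_A(a',a'), where ρ_x := P^x(T_B < T_C and the subsequent return to A also occurs before T_C). -/

import Mathlib

open MeasureTheory ProbabilityTheory
open scoped ENNReal
open scoped Classical

noncomputable section

/-- First hitting time of a set `A` by a path `p`, valued in `ℝ≥0∞` (`⊤` if never hit). -/
def hitTime {V : Type*} (p : ℕ → V) (A : Set V) : ℝ≥0∞ :=
  ⨅ t ∈ {t : ℕ | p t ∈ A}, (t : ℝ≥0∞)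

/-- First hitting time of `A` strictly after time `T`. -/
def hitAfter {V : Type*} (p : ℕ → V) (A : Set V) (T : ℝ≥0∞) : ℝ≥0∞ :=
  ⨅ t ∈ {t : ℕ | T < (t : ℝ≥0∞) ∧ p t ∈ A}, (t : ℝ≥0∞)

/-- Position at time `t` of the random walk started at `x` with steps `X j`. -/
def walk {Ω : Type*} (X : ℕ → Ω → ℤ × ℤ) (x : ℤ × ℤ) (t : ℕ) (ω : Ω) : ℤ × ℤ :=
  x + ∑ j ∈ Finset.range t, X j ω

/-- Green's function of visits to `y` from `x` before hitting `Eᶜ`. -/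
def green {Ω : Type*} [MeasurableSpace Ω] (P : Measure Ω) (X : ℕ → Ω → ℤ × ℤ)
    (E : Set (ℤ × ℤ)) (x y : ℤ × ℤ) : ℝ≥0∞ :=
  ∑' j : ℕ, P {ω | walk X x j ω = y ∧ (j : ℝ≥0∞) < hitTime (fun t => walk X x t ω) Eᶜ}

/-- `ρ_a = P^a(T_B < T_C, T*_A < T_C)`: starting from `a`, the walk reaches `B` before `C`
and afterwards returns to `A` before `C`. -/
def excRho {Ω : Type*} [MeasurableSpace Ω] (P : Measure Ω) (X : ℕ → Ω → ℤ × ℤ)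
    (A B C : Set (ℤ × ℤ)) (a : ℤ × ℤ) : ℝ≥0∞ :=
  P {ω | hitTime (fun t => walk X a t ω) B < hitTime (fun t => walk X a t ω) C ∧
      hitAfter (fun t => walk X a t ω) A (hitTime (fun t => walk X a t ω) B) <
        hitTime (fun t => walk X a t ω) C}

def natInf (U : Set ℕ) : ℝ≥0∞ := ⨅ t ∈ U, (t : ℝ≥0∞)

lemma hitTime_eq_natInf {V : Type*} (p : ℕ → V) (A : Set V) :
    hitTime p A = natInf {t | p t ∈ A} := rfl

lemma hitAfter_eq_natInf {V : Type*} (p : ℕ → V) (A : Set V) (T : ℝ≥0∞) :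
    hitAfter p A T = natInf {t | T < (t : ℝ≥0∞) ∧ p t ∈ A} := rfl

lemma natInf_le {U : Set ℕ} {t : ℕ} (ht : t ∈ U) : natInf U ≤ t := iInf₂_le t ht

lemma natInf_eq_find {U : Set ℕ} (h : ∃ t, t ∈ U) : natInf U = (Nat.find h : ℝ≥0∞) :=
  le_antisymm (natInf_le (Nat.find_spec h))
    (le_iInf₂ fun t ht => by exact_mod_cast Nat.find_min' h ht)

lemma natInf_eq_top {U : Set ℕ} (h : ∀ t, t ∉ U) : natInf U = ⊤ := by
  rw [natInf, iInf_eq_top]; intro t; rw [iInf_eq_top]; exact fun ht => absurd ht (h t)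

lemma natInf_le_coe_iff {U : Set ℕ} {j : ℕ} :
    natInf U ≤ (j : ℝ≥0∞) ↔ ∃ t ∈ U, t ≤ j := by
  constructor
  · intro h
    by_cases hU : ∃ t, t ∈ U
    · refine ⟨Nat.find hU, Nat.find_spec hU, ?_⟩
      rw [natInf_eq_find hU] at h
      exact_mod_cast h
    · rw [natInf_eq_top (fun t ht => hU ⟨t, ht⟩)] at h
      exact absurd h (by simp)
  · rintro ⟨t, ht, htj⟩
    exact (natInf_le ht).trans (by exact_mod_cast htj)

lemma coe_lt_natInf_iff {U : Set ℕ} {j : ℕ} :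
    (j : ℝ≥0∞) < natInf U ↔ ∀ t ≤ j, t ∉ U := by
  rw [← not_le, natInf_le_coe_iff]
  push_neg
  constructor
  · intro h t htj ht
    exact absurd (h t ht) (not_lt.mpr htj)
  · intro h t ht
    by_contra hc
    exact h t (le_of_not_gt hc) ht

lemma natInf_lt_coe_iff {U : Set ℕ} {j : ℕ} :
    natInf U < (j : ℝ≥0∞) ↔ ∃ t ∈ U, t < j := by
  constructor
  · intro h
    have hU : ∃ t, t ∈ U := by
      by_contra hU
      rw [natInf_eq_top (fun t ht => hU ⟨t, ht⟩)] at h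
      exact absurd h (by simp)
    refine ⟨Nat.find hU, Nat.find_spec hU, ?_⟩
    rw [natInf_eq_find hU] at h
    exact_mod_cast h
  · rintro ⟨t, ht, htj⟩
    exact lt_of_le_of_lt (natInf_le ht) (by exact_mod_cast htj)

lemma natInf_eq_coe {U : Set ℕ} {m : ℕ} (hm : m ∈ U) (hmin : ∀ t ∈ U, m ≤ t) :
    natInf U = (m : ℝ≥0∞) :=
  le_antisymm (natInf_le hm) (le_iInf₂ fun t ht => by exact_mod_cast hmin t ht)

lemma natInf_eq_coe_elim {U : Set ℕ} {m : ℕ} (h : natInf U = (m : ℝ≥0∞)) :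
    m ∈ U ∧ ∀ t ∈ U, m ≤ t := by
  have hU : ∃ t, t ∈ U := by
    by_contra hU
    rw [natInf_eq_top (fun t ht => hU ⟨t, ht⟩)] at h
    exact (by simp : (⊤ : ℝ≥0∞) ≠ (m : ℝ≥0∞)) h
  rw [natInf_eq_find hU] at h
  have : Nat.find hU = m := by exact_mod_cast h
  subst this
  exact ⟨Nat.find_spec hU, fun t ht => Nat.find_min' hU ht⟩




lemma measAll {γ : Type*} [MeasurableSpace γ] [MeasurableSingletonClass γ] [Countable γ]
    (s : Set γ) : MeasurableSet s := s.to_countable.measurableSet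

variable {Ω : Type*} [MeasurableSpace Ω] (X : ℕ → Ω → ℤ × ℤ)

/-- tuple of increments `X s, ..., X (s+m-1)` -/
def tup (s m : ℕ) (ω : Ω) : Fin m → ℤ × ℤ := fun i => X (s + i) ω

lemma tup_measurable (hX : ∀ j, Measurable (X j)) (s m : ℕ) : Measurable (tup X s m) :=
  measurable_pi_lambda _ fun i => hX (s + i)

variable (P : Measure Ω) [IsProbabilityMeasure P] (μ : Measure (ℤ × ℤ))

lemma cyl_prob (hX : ∀ j, Measurable (X j))
    (hind : iIndepFun X P)
    (hlaw : ∀ j, Measure.map (X j) P = μ) (s m : ℕ) (v : Fin m → ℤ × ℤ) :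
    P (tup X s m ⁻¹' {v}) = ∏ i : Fin m, μ {v i} := by
  classical
  set val : ℕ → ℤ × ℤ := fun n => if h : s ≤ n ∧ n - s < m then v ⟨n - s, h.2⟩ else 0 with hval
  have hset : tup X s m ⁻¹' {v} =
      ⋂ n ∈ (Finset.range m).image (fun i => s + i), X n ⁻¹' {val n} := by
    ext ω
    simp only [Set.mem_preimage, Set.mem_singleton_iff, Set.mem_iInter, Finset.mem_image,
      Finset.mem_range, funext_iff]
    have hvv : ∀ (i : ℕ) (hi : i < m), val (s + i) = v ⟨i, hi⟩ := by
      intro i hi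
      have h1 : s ≤ s + i ∧ (s + i) - s < m := by omega
      simp only [hval, dif_pos h1]
      congr 1
      apply Fin.ext
      simp
    constructor
    · rintro h n ⟨i, hi, rfl⟩
      rw [hvv i hi]
      exact h ⟨i, hi⟩
    · intro h i
      have := h (s + i.1) ⟨i.1, i.2, rfl⟩
      rw [hvv i.1 i.2] at this
      simpa [tup] using this
  rw [hset, hind.measure_inter_preimage_eq_mul _ (fun n _ => measAll _)]
  rw [Finset.prod_image (by intro x _ y _ h; beta_reduce at h; omega)]
  rw [← Fin.prod_univ_eq_prod_range (fun i => P (X (s + i) ⁻¹' {val (s + i)})) m]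
  apply Finset.prod_congr rfl
  intro i _
  have hvv : val (s + i.1) = v i := by
    have h1 : s ≤ s + i.1 ∧ (s + i.1) - s < m := by omega
    simp only [hval, dif_pos h1]
    congr 1
    apply Fin.ext
    simp
  rw [hvv, ← hlaw (s + i.1), Measure.map_apply (hX _) (measAll _)]

end


section

variable {Ω : Type*} [MeasurableSpace Ω] (X : ℕ → Ω → ℤ × ℤ) (P : Measure Ω)
  [IsProbabilityMeasure P] (μ : Measure (ℤ × ℤ))

lemma cyl_inter (m k : ℕ) (u : Fin m → ℤ × ℤ) (v : Fin k → ℤ × ℤ) :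
    tup X 0 m ⁻¹' {u} ∩ tup X m k ⁻¹' {v} = tup X 0 (m + k) ⁻¹' {Fin.append u v} := by
  ext ω
  simp only [Set.mem_inter_iff, Set.mem_preimage, Set.mem_singleton_iff, funext_iff, tup]
  constructor
  · rintro ⟨h1, h2⟩ i
    refine Fin.addCases (fun i => ?_) (fun i => ?_) i
    · rw [Fin.append_left]
      simpa using h1 i
    · rw [Fin.append_right]
      simpa using h2 i
  · intro h
    constructor
    · intro i
      have := h (Fin.castAdd k i)
      rw [Fin.append_left] at this
      simpa using this
    · intro i
      have := h (Fin.natAdd m i)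
      rw [Fin.append_right] at this
      simpa using this

lemma cyl_prob_two (hX : ∀ j, Measurable (X j))
    (hind : iIndepFun X P)
    (hlaw : ∀ j, Measure.map (X j) P = μ) (m k : ℕ) (u : Fin m → ℤ × ℤ) (v : Fin k → ℤ × ℤ) :
    P (tup X 0 m ⁻¹' {u} ∩ tup X m k ⁻¹' {v})
      = P (tup X 0 m ⁻¹' {u}) * P (tup X m k ⁻¹' {v}) := by
  rw [cyl_inter, cyl_prob X P μ hX hind hlaw, cyl_prob X P μ hX hind hlaw,
    cyl_prob X P μ hX hind hlaw, Fin.prod_univ_add]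
  congr 1
  · exact Finset.prod_congr rfl fun i _ => by rw [Fin.append_left]
  · exact Finset.prod_congr rfl fun i _ => by rw [Fin.append_right]

/-- probability of a tuple event as a sum over cylinder values -/
lemma tupEvent_prob (hX : ∀ j, Measurable (X j)) (s m : ℕ) (E : Set (Fin m → ℤ × ℤ)) :
    P (tup X s m ⁻¹' E) = ∑' v : Fin m → ℤ × ℤ,
      if v ∈ E then P (tup X s m ⁻¹' {v}) else 0 := by
  have : tup X s m ⁻¹' E = ⋃ v : Fin m → ℤ × ℤ,
      if v ∈ E then tup X s m ⁻¹' {v} else ∅ := by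
    ext ω
    simp only [Set.mem_preimage, Set.mem_iUnion]
    constructor
    · intro h
      exact ⟨tup X s m ω, by rw [if_pos h]; rfl⟩
    · rintro ⟨v, hv⟩
      by_cases hvE : v ∈ E
      · rw [if_pos hvE] at hv
        simp only [Set.mem_preimage, Set.mem_singleton_iff] at hv
        rwa [hv]
      · rw [if_neg hvE] at hv
        exact absurd hv (Set.notMem_empty ω)
  rw [this, measure_iUnion]
  · apply tsum_congr
    intro v
    split_ifs with h
    · rfl
    · simp
  · intro v w hvw
    dsimp only [Function.onFun]
    split_ifs
    · refine Set.disjoint_left.mpr fun ω h1 h2 => ?_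
      simp only [Set.mem_preimage, Set.mem_singleton_iff] at h1 h2
      exact hvw (h1.symm.trans h2)
    all_goals simp
  · intro v
    split_ifs
    · exact tup_measurable X hX s m (measAll _)
    · exact MeasurableSet.empty

lemma tupEvent_shift (hX : ∀ j, Measurable (X j))
    (hind : iIndepFun X P)
    (hlaw : ∀ j, Measure.map (X j) P = μ) (s m : ℕ) (E : Set (Fin m → ℤ × ℤ)) :
    P (tup X s m ⁻¹' E) = P (tup X 0 m ⁻¹' E) := by
  rw [tupEvent_prob X P hX, tupEvent_prob X P hX]
  apply tsum_congr
  intro v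
  split_ifs with h
  · rw [cyl_prob X P μ hX hind hlaw, cyl_prob X P μ hX hind hlaw]
  · rfl

lemma tupEvent_indep (hX : ∀ j, Measurable (X j))
    (hind : iIndepFun X P)
    (hlaw : ∀ j, Measure.map (X j) P = μ) (m k : ℕ)
    (E : Set (Fin m → ℤ × ℤ)) (F : Set (Fin k → ℤ × ℤ)) :
    P (tup X 0 m ⁻¹' E ∩ tup X m k ⁻¹' F)
      = P (tup X 0 m ⁻¹' E) * P (tup X 0 k ⁻¹' F) := by
  have hdec : tup X 0 m ⁻¹' E ∩ tup X m k ⁻¹' F =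
      ⋃ p : (Fin m → ℤ × ℤ) × (Fin k → ℤ × ℤ),
        if p.1 ∈ E ∧ p.2 ∈ F then tup X 0 m ⁻¹' {p.1} ∩ tup X m k ⁻¹' {p.2} else ∅ := by
    ext ω
    simp only [Set.mem_inter_iff, Set.mem_preimage, Set.mem_iUnion]
    constructor
    · rintro ⟨h1, h2⟩
      exact ⟨(tup X 0 m ω, tup X m k ω), by rw [if_pos ⟨h1, h2⟩]; exact ⟨rfl, rfl⟩⟩
    · rintro ⟨p, hp⟩
      by_cases hpE : p.1 ∈ E ∧ p.2 ∈ F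
      · rw [if_pos hpE] at hp
        obtain ⟨h1, h2⟩ := hp
        simp only [Set.mem_preimage, Set.mem_singleton_iff] at h1 h2
        rw [h1, h2]
        exact hpE
      · rw [if_neg hpE] at hp
        exact absurd hp (Set.notMem_empty ω)
  rw [hdec, measure_iUnion, tupEvent_prob X P hX, tupEvent_prob X P hX]
  · rw [ENNReal.tsum_prod', ← ENNReal.tsum_mul_right]
    apply tsum_congr
    intro u
    rw [← ENNReal.tsum_mul_left]
    apply tsum_congr
    intro v
    by_cases hu : u ∈ E <;> by_cases hv : v ∈ F
    · rw [if_pos ⟨hu, hv⟩, if_pos hu, if_pos hv]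
      show P (tup X 0 m ⁻¹' {u} ∩ tup X m k ⁻¹' {v}) = _
      rw [cyl_prob_two X P μ hX hind hlaw m k u v,
        cyl_prob X P μ hX hind hlaw m k v, cyl_prob X P μ hX hind hlaw 0 k v]
    all_goals simp [hu, hv]
  · intro p q hpq
    dsimp only [Function.onFun]
    split_ifs
    · refine Set.disjoint_left.mpr ?_
      rintro ω ⟨h1, h2⟩ ⟨h3, h4⟩
      simp only [Set.mem_preimage, Set.mem_singleton_iff] at h1 h2 h3 h4
      exact hpq (Prod.ext (h1.symm.trans h3) (h2.symm.trans h4))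
    all_goals simp
  · intro p
    split_ifs
    · exact ((tup_measurable X hX 0 m) (measAll _)).inter ((tup_measurable X hX m k) (measAll _))
    · exact MeasurableSet.empty

end


section



/-- extension of a finite vector by `0` -/
def extv {m : ℕ} (v : Fin m → ℤ × ℤ) : ℕ → ℤ × ℤ := fun n => if h : n < m then v ⟨n, h⟩ else 0

/-- deterministic path from `z` driven by increments `v` -/
def pathF (z : ℤ × ℤ) {m : ℕ} (v : Fin m → ℤ × ℤ) (t : ℕ) : ℤ × ℤ :=
  z + ∑ j ∈ Finset.range t, extv v j

variable {Ω : Type*} [MeasurableSpace Ω] (X : ℕ → Ω → ℤ × ℤ)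

lemma bridge1 (x : ℤ × ℤ) (m : ℕ) (ω : Ω) {t : ℕ} (ht : t ≤ m) :
    pathF x (tup X 0 m ω) t = walk X x t ω := by
  unfold pathF walk
  congr 1
  apply Finset.sum_congr rfl
  intro j hj
  rw [Finset.mem_range] at hj
  have hjm : j < m := lt_of_lt_of_le hj ht
  simp [extv, tup, dif_pos hjm]

lemma bridge2 {x z : ℤ × ℤ} (m k : ℕ) (ω : Ω) (hz : walk X x m ω = z) {t : ℕ} (ht : t ≤ k) :
    pathF z (tup X m k ω) t = walk X x (m + t) ω := by
  unfold pathF walk at *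
  rw [Finset.sum_range_add, ← add_assoc, hz]
  congr 1
  apply Finset.sum_congr rfl
  intro j hj
  rw [Finset.mem_range] at hj
  have hjk : j < k := lt_of_lt_of_le hj ht
  simp [extv, tup, dif_pos hjk]

end


section




/-- increments-vector predicate for "`σ = m` and no visit to `C` before `m`" -/
def PhiSet (x a' : ℤ × ℤ) (B C : Set (ℤ × ℤ)) (m : ℕ) : Set (Fin m → ℤ × ℤ) :=
  {u | pathF x u m = a' ∧ (∃ s < m, pathF x u s ∈ B) ∧
    (∀ t < m, (∃ s < t, pathF x u s ∈ B) → pathF x u t ≠ a') ∧ ∀ t < m, pathF x u t ∉ C}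

/-- increments-vector predicate for "at `a'` at time `k`, no visit to `C` up to `k`" -/
def PsiSet (a' : ℤ × ℤ) (C : Set (ℤ × ℤ)) (k : ℕ) : Set (Fin k → ℤ × ℤ) :=
  {v | pathF a' v k = a' ∧ ∀ t ≤ k, pathF a' v t ∉ C}

variable {Ω : Type*} [MeasurableSpace Ω] (X : ℕ → Ω → ℤ × ℤ)

/-- first visit to `a'` strictly after the hitting time of `B`, walk started at `x` -/
noncomputable def sigr (a' : ℤ × ℤ) (B : Set (ℤ × ℤ)) (x : ℤ × ℤ) (ω : Ω) : ℝ≥0∞ :=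
  hitAfter (fun t => walk X x t ω) {a'} (hitTime (fun t => walk X x t ω) B)

/-- visits to `a'` at time `j` before hitting `C`, walk started at `x` -/
def Dset (a' : ℤ × ℤ) (C : Set (ℤ × ℤ)) (x : ℤ × ℤ) (j : ℕ) : Set Ω :=
  {ω | walk X x j ω = a' ∧ (j : ℝ≥0∞) < hitTime (fun t => walk X x t ω) C}

/-- the event defining `excRho` -/
def rhoSet (A B C : Set (ℤ × ℤ)) (x : ℤ × ℤ) : Set Ω :=
  {ω | hitTime (fun t => walk X x t ω) B < hitTime (fun t => walk X x t ω) C ∧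
    hitAfter (fun t => walk X x t ω) A (hitTime (fun t => walk X x t ω) B) <
      hitTime (fun t => walk X x t ω) C}

lemma psi_event (a' : ℤ × ℤ) (C : Set (ℤ × ℤ)) (k : ℕ) :
    tup X 0 k ⁻¹' PsiSet a' C k = Dset X a' C a' k := by
  ext ω
  simp only [Set.mem_preimage, PsiSet, Set.mem_setOf_eq, Dset, hitTime_eq_natInf]
  rw [coe_lt_natInf_iff]
  constructor
  · rintro ⟨h1, h2⟩
    refine ⟨by rw [← bridge1 X a' k ω (le_refl k)]; exact h1, ?_⟩
    intro t ht htC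
    exact h2 t ht (by rwa [bridge1 X a' k ω ht])
  · rintro ⟨h1, h2⟩
    refine ⟨by rw [bridge1 X a' k ω (le_refl k)]; exact h1, ?_⟩
    intro t ht htC
    rw [bridge1 X a' k ω ht] at htC
    exact h2 t ht htC

lemma phi_imp (x a' : ℤ × ℤ) (B C : Set (ℤ × ℤ)) (m : ℕ) (ω : Ω)
    (hω : tup X 0 m ω ∈ PhiSet x a' B C m) :
    sigr X a' B x ω = (m : ℝ≥0∞) ∧ (∀ t < m, walk X x t ω ∉ C) ∧ walk X x m ω = a' := by
  obtain ⟨h1, h2, h3, h4⟩ := hω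
  rw [bridge1 X x m ω (le_refl m)] at h1
  replace h2 : ∃ s < m, walk X x s ω ∈ B := by
    obtain ⟨s, hs, hsB⟩ := h2
    exact ⟨s, hs, by rwa [bridge1 X x m ω hs.le] at hsB⟩
  replace h3 : ∀ t < m, (∃ s < t, walk X x s ω ∈ B) → walk X x t ω ≠ a' := by
    intro t ht hex
    have h := h3 t ht (by
      obtain ⟨s, hst, hsB⟩ := hex
      exact ⟨s, hst, by rwa [bridge1 X x m ω (hst.trans ht).le]⟩)
    rwa [bridge1 X x m ω ht.le] at h
  replace h4 : ∀ t < m, walk X x t ω ∉ C := by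
    intro t ht htc
    exact h4 t ht (by rwa [bridge1 X x m ω ht.le])
  refine ⟨?_, h4, h1⟩
  rw [sigr, hitAfter_eq_natInf]
  apply natInf_eq_coe
  · refine ⟨?_, h1⟩
    rw [hitTime_eq_natInf, natInf_lt_coe_iff]
    obtain ⟨s, hs, hsB⟩ := h2
    exact ⟨s, hsB, hs⟩
  · intro t htU
    obtain ⟨hTB, hta⟩ := htU
    by_contra hlt
    push_neg at hlt
    apply h3 t hlt ?_ hta
    rw [hitTime_eq_natInf, natInf_lt_coe_iff] at hTB
    obtain ⟨s, hsB, hst⟩ := hTB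
    exact ⟨s, hst, hsB⟩

lemma phi_sub_rho (x a' : ℤ × ℤ) (A B C : Set (ℤ × ℤ)) (ha' : a' ∈ A) (ha'C : a' ∉ C)
    (m : ℕ) (ω : Ω) (hω : tup X 0 m ω ∈ PhiSet x a' B C m) :
    ω ∈ rhoSet X A B C x := by
  obtain ⟨hσ, hC, hm⟩ := phi_imp X x a' B C m ω hω
  rw [sigr, hitAfter_eq_natInf] at hσ
  obtain ⟨⟨hTB, -⟩, -⟩ := natInf_eq_coe_elim hσ
  have hTC : (m : ℝ≥0∞) < hitTime (fun t => walk X x t ω) C := by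
    rw [hitTime_eq_natInf, coe_lt_natInf_iff]
    intro t ht htC
    rcases lt_or_eq_of_le ht with h | h
    · exact hC t h htC
    · subst h
      rw [Set.mem_setOf_eq, hm] at htC
      exact ha'C htC
  refine ⟨hTB.trans hTC, ?_⟩
  apply lt_of_le_of_lt ?_ hTC
  rw [hitAfter_eq_natInf]
  exact natInf_le ⟨hTB, by rw [hm]; exact ha'⟩

lemma dsigma_sub (x a' : ℤ × ℤ) (B C : Set (ℤ × ℤ)) (m k : ℕ) :
    Dset X a' C x (m + k) ∩ {ω | sigr X a' B x ω = (m : ℝ≥0∞)} ⊆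
      tup X 0 m ⁻¹' PhiSet x a' B C m ∩ tup X m k ⁻¹' PsiSet a' C k := by
  rintro ω ⟨⟨hwalk, hTC⟩, hσ⟩
  rw [Set.mem_setOf_eq, sigr, hitAfter_eq_natInf] at hσ
  obtain ⟨⟨hTB, hma⟩, hmin⟩ := natInf_eq_coe_elim hσ
  rw [hitTime_eq_natInf] at hTC
  rw [coe_lt_natInf_iff] at hTC
  have hnoC : ∀ t ≤ m + k, walk X x t ω ∉ C := by
    intro t ht htC
    exact hTC t (by exact_mod_cast ht) htC
  constructor
  · refine ⟨by rw [bridge1 X x m ω (le_refl m)]; exact hma, ?_, ?_, ?_⟩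
    · rw [hitTime_eq_natInf, natInf_lt_coe_iff] at hTB
      obtain ⟨s, hsB, hsm⟩ := hTB
      exact ⟨s, hsm, by rw [bridge1 X x m ω hsm.le]; exact hsB⟩
    · intro t ht hex hta
      rw [bridge1 X x m ω ht.le] at hta
      have hTBt : hitTime (fun t => walk X x t ω) B < (t : ℝ≥0∞) := by
        obtain ⟨s, hst, hsB⟩ := hex
        rw [bridge1 X x m ω (hst.trans ht).le] at hsB
        rw [hitTime_eq_natInf, natInf_lt_coe_iff]
        exact ⟨s, hsB, hst⟩
      have := hmin t ⟨hTBt, hta⟩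
      exact absurd (by exact_mod_cast this : m ≤ t) (not_le.mpr ht)
    · intro t ht htC
      rw [bridge1 X x m ω ht.le] at htC
      exact hnoC t (by omega) htC
  · have hz : walk X x m ω = a' := hma
    refine ⟨by rw [bridge2 X m k ω hz (le_refl k)]; exact hwalk, ?_⟩
    intro t ht htC
    rw [bridge2 X m k ω hz ht] at htC
    exact hnoC (m + t) (by omega) htC

end


section

lemma sum_ite_shift (g : ℕ → ℝ≥0∞) (m n : ℕ) :
    ∑ j ∈ Finset.range n, (if m ≤ j then g (j - m) else 0) ≤ ∑ k ∈ Finset.range n, g k := by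
  rw [← Finset.sum_filter]
  have hfil : (Finset.range n).filter (fun j => m ≤ j) = Finset.Ico m n := by
    ext j
    simp only [Finset.mem_filter, Finset.mem_range, Finset.mem_Ico]
    omega
  rw [hfil]
  have : ∑ j ∈ Finset.Ico m n, g (j - m) = ∑ k ∈ Finset.range (n - m), g k := by
    rw [Finset.sum_Ico_eq_sum_range]
    apply Finset.sum_congr rfl
    intro k _
    congr 1
    omega
  rw [this]
  exact Finset.sum_le_sum_of_subset (Finset.range_subset_range.mpr (by omega))

lemma conv_le (f g : ℕ → ℝ≥0∞) (n : ℕ) :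
    ∑ j ∈ Finset.range n, ∑ m ∈ Finset.range (j + 1), f m * g (j - m)
      ≤ (∑ m ∈ Finset.range n, f m) * ∑ k ∈ Finset.range n, g k := by
  have step1 : ∀ j ∈ Finset.range n,
      ∑ m ∈ Finset.range (j + 1), f m * g (j - m)
        = ∑ m ∈ Finset.range n, (if m ≤ j then f m * g (j - m) else 0) := by
    intro j hj
    rw [Finset.mem_range] at hj
    rw [← Finset.sum_filter]
    apply Finset.sum_congr
    · ext m
      simp only [Finset.mem_filter, Finset.mem_range]
      omega
    · intro m _; rfl
  rw [Finset.sum_congr rfl step1, Finset.sum_comm]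
  rw [Finset.sum_mul]
  apply Finset.sum_le_sum
  intro m _
  have : ∑ j ∈ Finset.range n, (if m ≤ j then f m * g (j - m) else 0)
      = f m * ∑ j ∈ Finset.range n, (if m ≤ j then g (j - m) else 0) := by
    rw [Finset.mul_sum]
    apply Finset.sum_congr rfl
    intro j _
    split_ifs <;> simp
  rw [this]
  exact mul_le_mul_right (sum_ite_shift g m n) (f m)

end

section
variable {Ω : Type*} [MeasurableSpace Ω] (X : ℕ → Ω → ℤ × ℤ)

lemma dsplit (A B C : Set (ℤ × ℤ)) (hAB : Disjoint A B) (a' x : ℤ × ℤ) (ha' : a' ∈ A) (j : ℕ) :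
    Dset X a' C x j ⊆
      {ω | walk X x j ω = a' ∧ (j : ℝ≥0∞) < hitTime (fun t => walk X x t ω) (B ∪ C)} ∪
        ⋃ m ∈ Finset.range (j + 1),
          (Dset X a' C x j ∩ {ω | sigr X a' B x ω = (m : ℝ≥0∞)}) := by
  rintro ω ⟨hwa, hTC⟩
  by_cases hj : (j : ℝ≥0∞) < hitTime (fun t => walk X x t ω) (B ∪ C)
  · exact Or.inl ⟨hwa, hj⟩
  right
  push_neg at hj
  rw [hitTime_eq_natInf, natInf_le_coe_iff] at hj
  obtain ⟨t, htBC, htj⟩ := hj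
  rw [hitTime_eq_natInf, coe_lt_natInf_iff] at hTC
  have htB : t ∈ {t | walk X x t ω ∈ B} := by
    rcases htBC with h | h
    · exact h
    · exact absurd h (hTC t htj)
  have hU : ∃ s, s ∈ {s | walk X x s ω ∈ B} := ⟨t, htB⟩
  have hTBj : hitTime (fun t => walk X x t ω) B < (j : ℝ≥0∞) := by
    rw [hitTime_eq_natInf, natInf_lt_coe_iff]
    refine ⟨Nat.find hU, Nat.find_spec hU, ?_⟩
    have hfj : Nat.find hU ≤ j := le_trans (Nat.find_min' hU htB) htj
    rcases lt_or_eq_of_le hfj with h | h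
    · exact h
    · exfalso
      have hfB : walk X x (Nat.find hU) ω ∈ B := Nat.find_spec hU
      rw [h, hwa] at hfB
      exact Set.disjoint_left.mp hAB ha' hfB
  have hU2 : ∃ s, s ∈ {s : ℕ | hitTime (fun t => walk X x t ω) B < (s : ℝ≥0∞) ∧
      walk X x s ω ∈ ({a'} : Set (ℤ × ℤ))} := ⟨j, hTBj, hwa⟩
  have hmem : Nat.find hU2 ≤ j := Nat.find_min' hU2 ⟨hTBj, hwa⟩
  apply Set.mem_biUnion (Finset.mem_range.mpr (by omega : Nat.find hU2 < j + 1))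
  refine ⟨⟨hwa, ?_⟩, ?_⟩
  · rw [hitTime_eq_natInf, coe_lt_natInf_iff]
    exact hTC
  · show sigr X a' B x ω = ((Nat.find hU2 : ℕ) : ℝ≥0∞)
    rw [sigr, hitAfter_eq_natInf, natInf_eq_find hU2]
    congr!

lemma phi_pairwise_disjoint (x a' : ℤ × ℤ) (B C : Set (ℤ × ℤ)) {m m' : ℕ} (h : m ≠ m') :
    Disjoint (tup X 0 m ⁻¹' PhiSet x a' B C m) (tup X 0 m' ⁻¹' PhiSet x a' B C m') := by
  refine Set.disjoint_left.mpr fun ω h1 h2 => ?_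
  have e1 := (phi_imp X x a' B C m ω h1).1
  have e2 := (phi_imp X x a' B C m' ω h2).1
  rw [e1] at e2
  exact h (by exact_mod_cast e2)

variable (P : Measure Ω) [IsProbabilityMeasure P] (μ : Measure (ℤ × ℤ))

set_option maxHeartbeats 1000000 in
lemma key_bound (hX : ∀ j, Measurable (X j))
    (hind : iIndepFun X P)
    (hlaw : ∀ j, Measure.map (X j) P = μ)
    (A B C : Set (ℤ × ℤ)) (hAB : Disjoint A B) (hAC : Disjoint A C)
    (a' x : ℤ × ℤ) (ha' : a' ∈ A) (n : ℕ) :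
    ∑ j ∈ Finset.range n, P (Dset X a' C x j) ≤
      (∑ j ∈ Finset.range n,
        P {ω | walk X x j ω = a' ∧ (j : ℝ≥0∞) < hitTime (fun t => walk X x t ω) (B ∪ C)}) +
      P (rhoSet X A B C x) * ∑ k ∈ Finset.range n, P (Dset X a' C a' k) := by
  have ha'C : a' ∉ C := fun h => Set.disjoint_left.mp hAC ha' h
  have step1 : ∑ j ∈ Finset.range n, P (Dset X a' C x j) ≤
      (∑ j ∈ Finset.range n,
        P {ω | walk X x j ω = a' ∧ (j : ℝ≥0∞) < hitTime (fun t => walk X x t ω) (B ∪ C)}) +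
      ∑ j ∈ Finset.range n, ∑ m ∈ Finset.range (j + 1),
        P (Dset X a' C x j ∩ {ω | sigr X a' B x ω = (m : ℝ≥0∞)}) := by
    rw [← Finset.sum_add_distrib]
    apply Finset.sum_le_sum
    intro j _
    refine le_trans (measure_mono (dsplit X A B C hAB a' x ha' j)) ?_
    refine le_trans (measure_union_le _ _) ?_
    exact add_le_add_right (measure_biUnion_finset_le _ _) _
  refine step1.trans (add_le_add_right ?_ _)
  have step2 : ∑ j ∈ Finset.range n, ∑ m ∈ Finset.range (j + 1),
      P (Dset X a' C x j ∩ {ω | sigr X a' B x ω = (m : ℝ≥0∞)}) ≤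
      ∑ j ∈ Finset.range n, ∑ m ∈ Finset.range (j + 1),
        P (tup X 0 m ⁻¹' PhiSet x a' B C m) * P (Dset X a' C a' (j - m)) := by
    apply Finset.sum_le_sum
    intro j _
    apply Finset.sum_le_sum
    intro m hm
    rw [Finset.mem_range] at hm
    have hj : m + (j - m) = j := by omega
    calc P (Dset X a' C x j ∩ {ω | sigr X a' B x ω = (m : ℝ≥0∞)})
        = P (Dset X a' C x (m + (j - m)) ∩ {ω | sigr X a' B x ω = (m : ℝ≥0∞)}) := by rw [hj]
      _ ≤ P (tup X 0 m ⁻¹' PhiSet x a' B C m ∩ tup X m (j - m) ⁻¹' PsiSet a' C (j - m)) :=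
          measure_mono (dsigma_sub X x a' B C m (j - m))
      _ = P (tup X 0 m ⁻¹' PhiSet x a' B C m) * P (tup X 0 (j - m) ⁻¹' PsiSet a' C (j - m)) :=
          tupEvent_indep X P μ hX hind hlaw m (j - m) _ _
      _ = P (tup X 0 m ⁻¹' PhiSet x a' B C m) * P (Dset X a' C a' (j - m)) := by
          rw [psi_event]
  refine step2.trans (le_trans (conv_le (fun m => P (tup X 0 m ⁻¹' PhiSet x a' B C m))
    (fun k => P (Dset X a' C a' k)) n) ?_)
  apply mul_le_mul_left
  have hdisj : (Finset.range n : Set ℕ).Pairwise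
      (Function.onFun Disjoint (fun m => tup X 0 m ⁻¹' PhiSet x a' B C m)) :=
    fun m _ m' _ h => phi_pairwise_disjoint X x a' B C h
  rw [← measure_biUnion_finset hdisj (fun m _ => tup_measurable X hX 0 m (measAll _))]
  apply measure_mono
  intro ω hω
  rw [Set.mem_iUnion₂] at hω
  obtain ⟨m, -, hm⟩ := hω
  exact phi_sub_rho X x a' A B C ha' ha'C m ω hm

end

lemma hit_mono {V : Type*} (p : ℕ → V) {S S' : Set V} (h : S' ⊆ S) :
    hitTime p S ≤ hitTime p S' := by
  rw [hitTime_eq_natInf, hitTime_eq_natInf]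
  exact le_iInf₂ fun t ht => natInf_le (h ht)

theorem green_two_set_excursion_bound {Ω : Type*} [MeasurableSpace Ω] (P : Measure Ω)
    [IsProbabilityMeasure P] (X : ℕ → Ω → ℤ × ℤ) (hX : ∀ j, Measurable (X j))
    (μ : Measure (ℤ × ℤ)) [IsProbabilityMeasure μ]
    (hind : iIndepFun X P)
    (hlaw : ∀ j, Measure.map (X j) P = μ)
    (hsym : Measure.map (fun z : ℤ × ℤ => -z) μ = μ)
    (hrec : ∀ x y : ℤ × ℤ, ∀ᵐ ω ∂P, ∃ t : ℕ, walk X x t ω = y)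
    (A B C : Set (ℤ × ℤ)) (hcover : A ∪ B ∪ C = Set.univ)
    (hAB : Disjoint A B) (hAC : Disjoint A C) (hBC : Disjoint B C)
    (a a' : ℤ × ℤ) (ha : a ∈ A) (ha' : a' ∈ A)
    (hρ : excRho P X A B C a' < 1) :
    green P X A a a' ≤ green P X (A ∪ B) a a' ∧
    green P X (A ∪ B) a a' ≤
      green P X A a a' +
        (excRho P X A B C a / (1 - excRho P X A B C a')) * green P X A a' a' := by
  have hC : (A ∪ B)ᶜ = C := by
    ext z
    simp only [Set.mem_compl_iff, Set.mem_union]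
    constructor
    · intro h
      have hz : z ∈ A ∪ B ∪ C := hcover ▸ Set.mem_univ z
      rcases hz with h' | h'
      · exact absurd h' h
      · exact h'
    · intro h hAB'
      rcases hAB' with h' | h'
      · exact Set.disjoint_left.mp hAC h' h
      · exact Set.disjoint_left.mp hBC h' h
  have hAc : Aᶜ = B ∪ C := by
    ext z
    simp only [Set.mem_compl_iff, Set.mem_union]
    constructor
    · intro h
      have hz : z ∈ A ∪ B ∪ C := hcover ▸ Set.mem_univ z
      rcases hz with (h' | h') | h'
      · exact absurd h' h
      · exact Or.inl h'
      · exact Or.inr h'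
    · rintro (h | h) hA'
      · exact Set.disjoint_left.mp hAB hA' h
      · exact Set.disjoint_left.mp hAC hA' h
  -- identifications
  have hgAB : ∀ x, green P X (A ∪ B) x a' = ∑' j : ℕ, P (Dset X a' C x j) := by
    intro x
    unfold green Dset
    rw [hC]
  have hgA : ∀ x, green P X A x a' = ∑' j : ℕ,
      P {ω | walk X x j ω = a' ∧ (j : ℝ≥0∞) < hitTime (fun t => walk X x t ω) (B ∪ C)} := by
    intro x
    unfold green
    rw [hAc]
  have hrho : ∀ x, excRho P X A B C x = P (rhoSet X A B C x) := fun _ => rfl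
  constructor
  · apply ENNReal.tsum_le_tsum
    intro j
    apply measure_mono
    rintro ω ⟨h1, h2⟩
    exact ⟨h1, lt_of_lt_of_le h2 (hit_mono _ (Set.compl_subset_compl.mpr Set.subset_union_left))⟩
  -- main bound
  set ρ' := excRho P X A B C a' with hρ'def
  set ρa := excRho P X A B C a with hρadef
  set GA' := green P X A a' a' with hGA'def
  set Hn : ℕ → ℝ≥0∞ := fun n => ∑ k ∈ Finset.range n, P (Dset X a' C a' k) with hHndef
  have hHn_ne_top : ∀ n, Hn n ≠ ⊤ := by
    intro n
    have : Hn n ≤ (n : ℝ≥0∞) := by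
      rw [hHndef]
      calc ∑ k ∈ Finset.range n, P (Dset X a' C a' k)
          ≤ ∑ _k ∈ Finset.range n, 1 := Finset.sum_le_sum fun k _ => prob_le_one
        _ = (n : ℝ≥0∞) := by simp
    exact ne_top_of_le_ne_top (ENNReal.natCast_ne_top n) this
  have hkey : ∀ (x : ℤ × ℤ), x ∈ A → ∀ n,
      ∑ j ∈ Finset.range n, P (Dset X a' C x j) ≤
        green P X A x a' + excRho P X A B C x * Hn n := by
    intro x hx n
    refine (key_bound X P μ hX hind hlaw A B C hAB hAC a' x ha' n).trans ?_
    rw [hrho x]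
    apply add_le_add_left
    rw [hgA x]
    exact Summable.sum_le_tsum (Finset.range n) (fun _ _ => zero_le') ENNReal.summable
  -- recursion for Hn
  have hHn_bound : ∀ n, Hn n ≤ GA' / (1 - ρ') := by
    intro n
    have hrec' : Hn n ≤ GA' + ρ' * Hn n := hkey a' ha' n
    have h1 : Hn n - ρ' * Hn n ≤ GA' := tsub_le_iff_right.mpr hrec'
    have h2 : Hn n * (1 - ρ') ≤ GA' := by
      have hms : Hn n * (1 - ρ') = Hn n * 1 - Hn n * ρ' :=
        ENNReal.mul_sub fun _ _ => hHn_ne_top n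
      rw [hms, mul_one, mul_comm]
      exact h1
    rw [ENNReal.le_div_iff_mul_le (Or.inl ?_) (Or.inl ?_)]
    · exact h2
    · intro h
      rw [tsub_eq_zero_iff_le] at h
      exact absurd hρ (not_lt.mpr h)
    · exact ne_top_of_le_ne_top ENNReal.one_ne_top tsub_le_self
  refine le_trans (le_of_eq (hgAB a)) ?_
  rw [ENNReal.tsum_eq_iSup_nat]
  apply iSup_le
  intro n
  refine (hkey a ha n).trans ?_
  apply add_le_add_right
  calc excRho P X A B C a * Hn n
      ≤ ρa * (GA' / (1 - ρ')) := mul_le_mul_right (hHn_bound n) _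
    _ = ρa / (1 - ρ') * GA' := by
        rw [div_eq_mul_inv, div_eq_mul_inv, mul_comm GA', ← mul_assoc]
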